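/- (Key inequality in Hilbert space, inequality (32) of Section 3.) Under the Hilbert propagator setup and the Hilbert solution setup, for every t ∈ [0,T): ‖V(t)(u(t))‖ ≤ ‖u₀‖ + ∫₀ᵗ ‖V(ξ)‖·(α(ξ)·‖u(ξ)‖^p + β(ξ)) dξ. -/

import Mathlib

open MeasureTheory Filter Topology
open scoped ENNReal

theorem stmt11
    {H : Type*} [NormedAddCommGroup H] [InnerProductSpace ℂ H] [CompleteSpace H]
    (B U V : ℝ → H →L[ℂ] H)
    (hB : Continuous B)
    (hU0 : U 0 = 1) (hV0 : V 0 = 1)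
    (hVU : ∀ t, 0 ≤ t → (V t).comp (U t) = 1)
    (hUV : ∀ t, 0 ≤ t → (U t).comp (V t) = 1)
    (hUd : ∀ t, 0 ≤ t → HasDerivAt U ((B t).comp (U t)) t)
    (hVd : ∀ t, 0 ≤ t → HasDerivAt V (-((V t).comp (B t))) t)
    (p : ℝ) (hp : 1 < p)
    (α β : ℝ → ℝ) (hαc : Continuous α) (hβc : Continuous β)
    (hα0 : ∀ t, 0 ≤ α t) (hβ0 : ∀ t, 0 ≤ β t)
    (T : ℝ≥0∞) (hT : 0 < T)
    (u w G f : ℝ → H) (u₀ : H) (hu0 : u 0 = u₀)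
    (hwc : ContinuousOn w {t : ℝ | 0 ≤ t ∧ ENNReal.ofReal t < T})
    (hGc : ContinuousOn G {t : ℝ | 0 ≤ t ∧ ENNReal.ofReal t < T})
    (hfc : ContinuousOn f {t : ℝ | 0 ≤ t ∧ ENNReal.ofReal t < T})
    (hud : ∀ t, 0 ≤ t → ENNReal.ofReal t < T →
      HasDerivAt u (B t (u t) + w t + G t + f t) t)
    (hw : ∀ t, 0 ≤ t → ENNReal.ofReal t < T →
      (inner ℂ (V t (w t)) (V t (u t)) : ℂ).re ≤ 0)
    (hGb : ∀ t, 0 ≤ t → ENNReal.ofReal t < T → ‖G t‖ ≤ α t * ‖u t‖ ^ p)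
    (hfb : ∀ t, 0 ≤ t → ENNReal.ofReal t < T → ‖f t‖ ≤ β t)
    (hVud : ∀ t, 0 ≤ t → ENNReal.ofReal t < T →
      DifferentiableAt ℝ (fun s => ‖V s (u s)‖) t)
    :
    ∀ t, 0 ≤ t → ENNReal.ofReal t < T →
      ‖V t (u t)‖ ≤ ‖u₀‖ + ∫ ξ in (0:ℝ)..t, ‖V ξ‖ * (α ξ * ‖u ξ‖ ^ p + β ξ) := by
  intro t₀ ht₀0 ht₀T
  set g : ℝ → ℝ := fun s => ‖V s (u s)‖ with hg_def
  set h : ℝ → ℝ := fun s => ‖V s‖ * (α s * ‖u s‖ ^ p + β s) with hh_def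
  have hmem : ∀ s, s ∈ Set.Icc (0:ℝ) t₀ → 0 ≤ s ∧ ENNReal.ofReal s < T := fun s hs =>
    ⟨hs.1, lt_of_le_of_lt (ENNReal.ofReal_le_ofReal hs.2) ht₀T⟩
  -- continuity facts
  have hVc : ∀ s : ℝ, 0 ≤ s → ContinuousAt V s := fun s hs => (hVd s hs).continuousAt
  have huc : ∀ s, s ∈ Set.Icc (0:ℝ) t₀ → ContinuousAt u s := fun s hs =>
    (hud s (hmem s hs).1 (hmem s hs).2).continuousAt
  have hhc : ∀ s, s ∈ Set.Icc (0:ℝ) t₀ → ContinuousAt h s := by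
    intro s hs
    exact ((hVc s hs.1).norm.mul
      (((hαc.continuousAt).mul (((huc s hs).norm).rpow_const (Or.inr (by positivity)))).add
        hβc.continuousAt))
  have hgc : ∀ s, s ∈ Set.Icc (0:ℝ) t₀ → ContinuousAt g s := fun s hs =>
    (hVud s (hmem s hs).1 (hmem s hs).2).continuousAt
  have hh0 : ∀ s, s ∈ Set.Icc (0:ℝ) t₀ → 0 ≤ h s := by
    intro s hs
    have := hα0 s; have := hβ0 s
    have : (0:ℝ) ≤ α s * ‖u s‖ ^ p + β s := by positivity
    exact mul_nonneg (norm_nonneg _) this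
  -- key derivative inequality
  have key : ∀ s, s ∈ Set.Icc (0:ℝ) t₀ → deriv g s ≤ h s := by
    intro s hs
    obtain ⟨hs0, hsT⟩ := hmem s hs
    by_cases hx : g s = 0
    · have hmin : IsLocalMin g s := by
        apply Filter.Eventually.of_forall
        intro r; rw [hx]; exact norm_nonneg _
      rw [hmin.deriv_eq_zero]
      exact hh0 s hs
    · have hg0 : 0 < g s := lt_of_le_of_ne (norm_nonneg _) (Ne.symm hx)
      set D := V s (w s) + V s (G s) + V s (f s) with hD_def
      have hD : HasDerivAt (fun r => V r (u r)) D s := by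
        have hVd' : HasDerivAt (fun r => (V r).restrictScalars ℝ)
            ((-((V s).comp (B s))).restrictScalars ℝ) s :=
          (ContinuousLinearMap.restrictScalarsL ℂ H H ℝ ℝ).hasFDerivAt.comp_hasDerivAt s
            (hVd s hs0)
        have := hVd'.clm_apply (hud s hs0 hsT)
        convert this using 1
        show D = -((V s) ((B s) (u s))) + (V s) ((B s) (u s) + w s + G s + f s)
        simp only [hD_def, ContinuousLinearMap.coe_restrictScalars',
          ContinuousLinearMap.neg_apply, ContinuousLinearMap.comp_apply, map_add]
        abel
        rfl
      have hgd : HasDerivAt g (deriv g s) s := (hVud s hs0 hsT).hasDerivAt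
      have hinner : HasDerivAt (fun r => (inner ℂ (V r (u r)) (V r (u r)) : ℂ))
          (inner ℂ (V s (u s)) D + inner ℂ D (V s (u s))) s := HasDerivAt.inner (𝕜 := ℂ) hD hD
      have hre : HasDerivAt (fun r => ((inner ℂ (V r (u r)) (V r (u r)) : ℂ)).re)
          ((inner ℂ (V s (u s)) D + inner ℂ D (V s (u s)) : ℂ).re) s := by
        exact Complex.reCLM.hasFDerivAt.comp_hasDerivAt s hinner
      have heq : (fun r => ((inner ℂ (V r (u r)) (V r (u r)) : ℂ)).re) = fun r => g r * g r := by
        funext r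
        exact inner_self_eq_norm_mul_norm (𝕜 := ℂ) (V r (u r))
      rw [heq] at hre
      have hmul : HasDerivAt (fun r => g r * g r) (deriv g s * g s + g s * deriv g s) s :=
        hgd.mul hgd
      have huniq : deriv g s * g s + g s * deriv g s
          = (inner ℂ (V s (u s)) D + inner ℂ D (V s (u s)) : ℂ).re := hmul.unique hre
      have hsymm : (inner ℂ (V s (u s)) D + inner ℂ D (V s (u s)) : ℂ).re
          = 2 * (inner ℂ (V s (u s)) D : ℂ).re := by
        have hcs : (inner ℂ D (V s (u s)) : ℂ).re = (inner ℂ (V s (u s)) D : ℂ).re :=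
          inner_re_symm (𝕜 := ℂ) D (V s (u s))
        rw [Complex.add_re, hcs]; ring
      -- bound re ⟪Vu, D⟫ ≤ g s * h s
      have hb1 : (inner ℂ (V s (u s)) (V s (w s)) : ℂ).re ≤ 0 := by
        have hcs : (inner ℂ (V s (u s)) (V s (w s)) : ℂ).re
            = (inner ℂ (V s (w s)) (V s (u s)) : ℂ).re :=
          inner_re_symm (𝕜 := ℂ) (V s (u s)) (V s (w s))
        rw [hcs]; exact hw s hs0 hsT
      have hVG : ‖V s (G s)‖ ≤ ‖V s‖ * (α s * ‖u s‖ ^ p) := by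
        calc ‖V s (G s)‖ ≤ ‖V s‖ * ‖G s‖ := (V s).le_opNorm _
        _ ≤ ‖V s‖ * (α s * ‖u s‖ ^ p) :=
          mul_le_mul_of_nonneg_left (hGb s hs0 hsT) (norm_nonneg _)
      have hVf : ‖V s (f s)‖ ≤ ‖V s‖ * β s := by
        calc ‖V s (f s)‖ ≤ ‖V s‖ * ‖f s‖ := (V s).le_opNorm _
        _ ≤ ‖V s‖ * β s := mul_le_mul_of_nonneg_left (hfb s hs0 hsT) (norm_nonneg _)
      have hb2 : (inner ℂ (V s (u s)) (V s (G s)) : ℂ).re ≤ g s * (‖V s‖ * (α s * ‖u s‖ ^ p)) := by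
        calc (inner ℂ (V s (u s)) (V s (G s)) : ℂ).re ≤ ‖V s (u s)‖ * ‖V s (G s)‖ :=
          re_inner_le_norm (𝕜 := ℂ) _ _
        _ ≤ g s * (‖V s‖ * (α s * ‖u s‖ ^ p)) :=
          mul_le_mul_of_nonneg_left hVG (norm_nonneg _)
      have hb3 : (inner ℂ (V s (u s)) (V s (f s)) : ℂ).re ≤ g s * (‖V s‖ * β s) := by
        calc (inner ℂ (V s (u s)) (V s (f s)) : ℂ).re ≤ ‖V s (u s)‖ * ‖V s (f s)‖ :=
          re_inner_le_norm (𝕜 := ℂ) _ _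
        _ ≤ g s * (‖V s‖ * β s) := mul_le_mul_of_nonneg_left hVf (norm_nonneg _)
      have hsplit : (inner ℂ (V s (u s)) D : ℂ).re
          = (inner ℂ (V s (u s)) (V s (w s)) : ℂ).re
            + (inner ℂ (V s (u s)) (V s (G s)) : ℂ).re
            + (inner ℂ (V s (u s)) (V s (f s)) : ℂ).re := by
        rw [hD_def, inner_add_right, inner_add_right, Complex.add_re, Complex.add_re]
      have hbound : (inner ℂ (V s (u s)) D : ℂ).re ≤ g s * h s := by
        show _ ≤ g s * (‖V s‖ * (α s * ‖u s‖ ^ p + β s))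
        rw [hsplit]
        have hring : g s * (‖V s‖ * (α s * ‖u s‖ ^ p)) + g s * (‖V s‖ * β s)
            = g s * (‖V s‖ * (α s * ‖u s‖ ^ p + β s)) := by ring
        linarith [hb1, hb2, hb3]
      -- conclude
      have : g s * deriv g s ≤ g s * h s := by nlinarith [huniq, hsymm, hbound]
      exact le_of_mul_le_mul_left this hg0
  -- define F and show antitone
  set P : ℝ → ℝ := fun s => ∫ ξ in (0:ℝ)..s, h ξ with hP_def
  have hhconOn : ContinuousOn h (Set.Icc 0 t₀) := fun s hs => (hhc s hs).continuousWithinAt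
  have hPcont : ContinuousOn P (Set.Icc 0 t₀) := by
    have : Set.uIcc (0:ℝ) t₀ = Set.Icc 0 t₀ := Set.uIcc_of_le ht₀0
    rw [← this]
    apply intervalIntegral.continuousOn_primitive_interval
    rw [this]
    exact hhconOn.integrableOn_compact isCompact_Icc
  have hgcOn : ContinuousOn g (Set.Icc 0 t₀) := fun s hs => (hgc s hs).continuousWithinAt
  set F : ℝ → ℝ := fun s => g s - P s with hF_def
  have hFd : ∀ s ∈ Set.Ioo (0:ℝ) t₀, HasDerivAt F (deriv g s - h s) s := by
    intro s hs
    have hsIcc : s ∈ Set.Icc (0:ℝ) t₀ := Set.mem_Icc.mpr ⟨hs.1.le, hs.2.le⟩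
    have hint : IntervalIntegrable h volume 0 s := by
      apply ContinuousOn.intervalIntegrable
      rw [Set.uIcc_of_le hs.1.le]
      exact hhconOn.mono (Set.Icc_subset_Icc_right hs.2.le)
    have hmeas : StronglyMeasurableAtFilter h (𝓝 s) := by
      refine ContinuousAt.stronglyMeasurableAtFilter isOpen_Ioo ?_ s hs
      intro x hx
      exact hhc x (Set.mem_Icc.mpr ⟨hx.1.le, hx.2.le⟩)
    have hPd : HasDerivAt P (h s) s :=
      intervalIntegral.integral_hasDerivAt_right hint hmeas (hhc s hsIcc)
    exact ((hVud s (hmem s hsIcc).1 (hmem s hsIcc).2).hasDerivAt).sub hPd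
  have hFcont : ContinuousOn F (Set.Icc 0 t₀) := hgcOn.sub hPcont
  have hAnti : AntitoneOn F (Set.Icc 0 t₀) := by
    apply antitoneOn_of_deriv_nonpos (convex_Icc 0 t₀) hFcont
    · intro s hs
      rw [interior_Icc] at hs
      exact (hFd s hs).differentiableAt.differentiableWithinAt
    · intro s hs
      rw [interior_Icc] at hs
      rw [(hFd s hs).deriv]
      have := key s (Set.mem_Icc.mpr ⟨hs.1.le, hs.2.le⟩)
      linarith
  have hle : F t₀ ≤ F 0 :=
    hAnti (Set.left_mem_Icc.mpr ht₀0) (Set.right_mem_Icc.mpr ht₀0) ht₀0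
  have hF0 : F 0 = ‖u₀‖ := by
    simp only [hF_def, hP_def, hg_def, intervalIntegral.integral_same, sub_zero, hV0, hu0,
      ContinuousLinearMap.one_apply]
  rw [hF0] at hle
  have : g t₀ - P t₀ ≤ ‖u₀‖ := hle
  linarith
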